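/- Let $F = \mathbb{Q}(t)$ be the field of rational functions in $t$ over $\mathbb{Q}$. In the power series ring $F\llbracket y \rrbracket$, the following identity holds: $\prod_{n \ge 1} \frac{(1 + y^n t^{2n-1})^2}{(1 - y^n t^{2n-2})(1 - y^n t^{2n})} \;=\; \sum_{n \ge 0} \Big( \sum_{\lambda \in \mathcal{P}_n} \Big(\frac{t+1}{t-1}\Big)^{\ell(\lambda)}\, t^{\,2n - 2|\lambda|} \prod_{j \,:\, \lambda_j \ge 1} \big(t^{2\lambda_j} - 1\big) \Big)\, y^n$, where the infinite product converges in the $y$-adic topology, $\mathcal{P}_n$ is the set of partitions of $n$, a partition is written $\lambda = [1^{\lambda_1} 2^{\lambda_2} \cdots n^{\lambda_n}]$ with $\lambda_j \ge 0$ the number of parts of size $j$ (so $n = \sum_j j\lambda_j$), $|\lambda| = \sum_j \lambda_j$ is the total number of parts, and $\ell(\lambda) = \#\{j : \lambda_j \ge 1\}$ is the number of distinct part sizes. Equivalently, the $y^n$-coefficient equals $t^{2n} \sum_{\lambda \in \mathcal{P}_n} \prod_{j=1}^{n} a_{\lambda_j}(t)$ where $a_0(t) = 1$ and $a_k(t)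 = \frac{t+1}{t-1}(1 - t^{-2k})$ for $k \ge 1$. -/

import Mathlib

/-- The coefficient field `F = ℚ(t)` carries the discrete topology. -/
noncomputable instance : TopologicalSpace (RatFunc ℚ) := ⊥

instance : DiscreteTopology (RatFunc ℚ) := ⟨rfl⟩

/-- The product topology on `F⟦y⟧` (coefficientwise convergence), under which the
infinite product below converges. -/
noncomputable instance : TopologicalSpace (PowerSeries (RatFunc ℚ)) :=
  inferInstanceAs (TopologicalSpace ((Unit →₀ ℕ) → RatFunc ℚ))

open Finset PowerSeries
open scoped Classical

noncomputable section HilbAux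

abbrev Fq : Type := RatFunc ℚ

def tq : Fq := RatFunc.X

def alq : Fq := (tq + 1) / (tq - 1)

/-- weight for part size `i+1` with multiplicity `k` -/
def wq (i k : ℕ) : Fq :=
  if k = 0 then 1 else alq * (tq ^ ((2 * i + 2) * k) - tq ^ ((2 * i) * k))

/-- the `i`-th factor of the product, expanded as a power series -/
def Gq (i : ℕ) : PowerSeries Fq :=
  PowerSeries.mk fun m => if (i + 1) ∣ m then wq i (m / (i + 1)) else 0

lemma tq_sub_one_ne : tq - 1 ≠ 0 := by
  rw [sub_ne_zero]
  intro h
  have h2 : algebraMap (Polynomial ℚ) (RatFunc ℚ) Polynomial.X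
      = algebraMap (Polynomial ℚ) (RatFunc ℚ) 1 := by
    rw [RatFunc.algebraMap_X, map_one]; exact h
  have := RatFunc.algebraMap_injective ℚ h2
  simpa [Polynomial.coeff_one] using congrArg (fun p => Polynomial.coeff p 1) this

lemma geom_inv (u : Fq) (s : ℕ) (hs : 0 < s) :
    (1 - PowerSeries.C u * PowerSeries.X ^ s) *
      PowerSeries.mk (fun m => if s ∣ m then u ^ (m / s) else 0) = 1 := by
  ext m
  have h1 : (PowerSeries.C u * PowerSeries.X ^ s) *
        PowerSeries.mk (fun m => if s ∣ m then u ^ (m / s) else 0)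
      = PowerSeries.C u *
        (PowerSeries.mk (fun m => if s ∣ m then u ^ (m / s) else 0)
          * PowerSeries.X ^ s) := by ring
  rw [sub_mul, one_mul, map_sub, h1, PowerSeries.coeff_C_mul, PowerSeries.coeff_mul_X_pow',
    PowerSeries.coeff_mk, PowerSeries.coeff_one]
  rcases eq_or_ne m 0 with rfl | hm
  · simp [hs.ne']
  · rw [if_neg hm]
    by_cases hd : s ∣ m
    · have hsm : s ≤ m := Nat.le_of_dvd (Nat.pos_of_ne_zero hm) hd
      rw [if_pos hsm, if_pos hd, PowerSeries.coeff_mk,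
        if_pos (Nat.dvd_sub hd dvd_rfl)]
      obtain ⟨q, rfl⟩ := hd
      have hq : q ≠ 0 := by rintro rfl; simp at hm
      obtain ⟨r, rfl⟩ := Nat.exists_eq_succ_of_ne_zero hq
      have h2 : s * (r + 1) - s = s * r := by
        rw [Nat.mul_succ, Nat.add_sub_cancel]
      rw [h2, Nat.mul_div_cancel_left _ hs, Nat.mul_div_cancel_left _ hs, pow_succ]
      ring
    · rw [if_neg hd]
      have h3 : (if s ≤ m then (PowerSeries.coeff (m - s))
          (PowerSeries.mk (fun m => if s ∣ m then u ^ (m / s) else 0)) else 0) = 0 := by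
        split_ifs with hsm
        · rw [PowerSeries.coeff_mk, if_neg]
          intro h
          apply hd
          have := Nat.dvd_add h (dvd_refl s)
          rwa [Nat.sub_add_cancel hsm] at this
        · rfl
      rw [h3, mul_zero, sub_zero]

lemma Gq_eq (i : ℕ) :
    Gq i = 1 + PowerSeries.C alq *
        PowerSeries.mk (fun m => if (i+1) ∣ m then (tq ^ (2*i+2)) ^ (m / (i+1)) else 0)
      - PowerSeries.C alq *
        PowerSeries.mk (fun m => if (i+1) ∣ m then (tq ^ (2*i)) ^ (m / (i+1)) else 0) := by
  ext m
  simp only [Gq, map_sub, map_add, PowerSeries.coeff_C_mul, PowerSeries.coeff_mk,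
    PowerSeries.coeff_one, wq]
  by_cases hd : (i + 1) ∣ m
  · rw [if_pos hd, if_pos hd, if_pos hd]
    rcases eq_or_ne m 0 with rfl | hm
    · simp
    · have hk : m / (i + 1) ≠ 0 := by
        rw [Nat.div_ne_zero_iff, and_iff_right (Nat.succ_ne_zero i)]
        exact Nat.le_of_dvd (Nat.pos_of_ne_zero hm) hd
      rw [if_neg hk, if_neg hm, ← pow_mul, ← pow_mul]
      ring
  · have hm : m ≠ 0 := by rintro rfl; exact hd (dvd_zero _)
    rw [if_neg hd, if_neg hd, if_neg hd, if_neg hm]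
    ring

lemma factor_eq (i : ℕ) :
    (1 + PowerSeries.C (tq ^ (2 * i + 1)) * PowerSeries.X ^ (i + 1)) ^ 2
        * (1 - PowerSeries.C (tq ^ (2 * i)) * PowerSeries.X ^ (i + 1))⁻¹
        * (1 - PowerSeries.C (tq ^ (2 * i + 2)) * PowerSeries.X ^ (i + 1))⁻¹
      = Gq i := by
  set s : ℕ := i + 1 with hsdef
  set a : Fq := tq ^ (2 * i) with hadef
  set b : Fq := tq ^ (2 * i + 2) with hbdef
  set c : Fq := tq ^ (2 * i + 1) with hcdef
  set Ga : PowerSeries Fq :=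
    PowerSeries.mk (fun m => if s ∣ m then a ^ (m / s) else 0) with hGa
  set Gb : PowerSeries Fq :=
    PowerSeries.mk (fun m => if s ∣ m then b ^ (m / s) else 0) with hGb
  have hspos : 0 < s := Nat.succ_pos i
  have ha : (1 - PowerSeries.C a * PowerSeries.X ^ s) * Ga = 1 := geom_inv a s hspos
  have hb : (1 - PowerSeries.C b * PowerSeries.X ^ s) * Gb = 1 := geom_inv b s hspos
  have hconst : ∀ u : Fq,
      PowerSeries.constantCoeff (1 - PowerSeries.C u * PowerSeries.X ^ s) ≠ 0 := by
    intro u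
    simp [hspos.ne']
  have hainv : (1 - PowerSeries.C a * PowerSeries.X ^ s)⁻¹ = Ga := by
    rw [PowerSeries.inv_eq_iff_mul_eq_one (hconst a)]
    rw [mul_comm] at ha; exact ha
  have hbinv : (1 - PowerSeries.C b * PowerSeries.X ^ s)⁻¹ = Gb := by
    rw [PowerSeries.inv_eq_iff_mul_eq_one (hconst b)]
    rw [mul_comm] at hb; exact hb
  rw [hainv, hbinv, Gq_eq i]
  have hD : (1 - PowerSeries.C a * PowerSeries.X ^ s)
      * (1 - PowerSeries.C b * PowerSeries.X ^ s) ≠ 0 := by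
    intro h0
    have h1 := congrArg (PowerSeries.constantCoeff) h0
    rw [map_mul, map_zero] at h1
    exact hconst a (mul_eq_zero.1 h1 |>.resolve_right (hconst b))
  apply mul_right_cancel₀ hD
  have lhs_eq : (1 + PowerSeries.C c * PowerSeries.X ^ s) ^ 2 * Ga * Gb *
      ((1 - PowerSeries.C a * PowerSeries.X ^ s)
        * (1 - PowerSeries.C b * PowerSeries.X ^ s))
      = (1 + PowerSeries.C c * PowerSeries.X ^ s) ^ 2 := by
    calc (1 + PowerSeries.C c * PowerSeries.X ^ s) ^ 2 * Ga * Gb *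
        ((1 - PowerSeries.C a * PowerSeries.X ^ s)
          * (1 - PowerSeries.C b * PowerSeries.X ^ s))
        = (1 + PowerSeries.C c * PowerSeries.X ^ s) ^ 2 *
            (((1 - PowerSeries.C a * PowerSeries.X ^ s) * Ga) *
             ((1 - PowerSeries.C b * PowerSeries.X ^ s) * Gb)) := by ring
      _ = _ := by rw [ha, hb]; ring
  have rhs_eq : (1 + PowerSeries.C alq * Gb - PowerSeries.C alq * Ga) *
      ((1 - PowerSeries.C a * PowerSeries.X ^ s)
        * (1 - PowerSeries.C b * PowerSeries.X ^ s))
      = (1 - PowerSeries.C a * PowerSeries.X ^ s)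
          * (1 - PowerSeries.C b * PowerSeries.X ^ s)
        + PowerSeries.C alq * (1 - PowerSeries.C a * PowerSeries.X ^ s)
        - PowerSeries.C alq * (1 - PowerSeries.C b * PowerSeries.X ^ s) := by
    calc (1 + PowerSeries.C alq * Gb - PowerSeries.C alq * Ga) *
        ((1 - PowerSeries.C a * PowerSeries.X ^ s)
          * (1 - PowerSeries.C b * PowerSeries.X ^ s))
        = (1 - PowerSeries.C a * PowerSeries.X ^ s)
            * (1 - PowerSeries.C b * PowerSeries.X ^ s)
          + PowerSeries.C alq * ((1 - PowerSeries.C a * PowerSeries.X ^ s) *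
              ((1 - PowerSeries.C b * PowerSeries.X ^ s) * Gb))
          - PowerSeries.C alq * ((1 - PowerSeries.C b * PowerSeries.X ^ s) *
              ((1 - PowerSeries.C a * PowerSeries.X ^ s) * Ga)) := by ring
      _ = _ := by rw [ha, hb]; ring
  rw [lhs_eq, rhs_eq]
  -- now a polynomial identity using scalar identities
  have hc2 : c ^ 2 = a * b := by
    rw [hcdef, hadef, hbdef, ← pow_mul, ← pow_add]; ring_nf
  have hal : alq * b - alq * a = 2 * c + a + b := by
    rw [hadef, hbdef, hcdef, alq]
    field_simp [tq_sub_one_ne]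
    ring
  have E1 : (PowerSeries.C c) ^ 2 = PowerSeries.C a * PowerSeries.C b := by
    rw [← map_pow, hc2, map_mul]
  have E2 : PowerSeries.C alq * PowerSeries.C b
      - PowerSeries.C alq * PowerSeries.C a
      = 2 * PowerSeries.C c + PowerSeries.C a + PowerSeries.C b := by
    rw [← map_mul, ← map_mul, ← map_sub, hal]
    push_cast [map_add, map_mul, map_ofNat]
    ring
  linear_combination (PowerSeries.X ^ s * PowerSeries.X ^ s) * E1
    - PowerSeries.X ^ s * E2

open Finset.HasAntidiagonal in
theorem weightedGF_prop (α : Type*) [CommSemiring α] (n : ℕ) (s : Finset ℕ)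
    (hs : ∀ i ∈ s, 0 < i) (v : ℕ → ℕ → α) (_hv : ∀ i, v i 0 = 1) :
    (PowerSeries.coeff n)
        (∏ i ∈ s, PowerSeries.mk fun m => if i ∣ m then v i (m / i) else 0) =
      ∑ p ∈ Finset.univ.filter (fun p : Nat.Partition n => ∀ j ∈ p.parts, j ∈ s),
        ∏ i ∈ s, v i (p.parts.count i) := by
  rw [PowerSeries.coeff_prod]
  simp_rw [PowerSeries.coeff_mk]
  rw [← Finset.sum_filter_of_ne
    (p := fun f : ℕ →₀ ℕ => ∀ i ∈ s, i ∣ f i)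
    (fun f _ hf i hi => by
      by_contra hdvd
      exact hf (Finset.prod_eq_zero hi (if_neg hdvd)))]
  have hsimp : ∀ f ∈ (finsuppAntidiag s n).filter (fun f : ℕ →₀ ℕ => ∀ i ∈ s, i ∣ f i),
      (∏ i ∈ s, if i ∣ f i then v i (f i / i) else 0) = ∏ i ∈ s, v i (f i / i) := by
    intro f hf
    rw [Finset.mem_filter] at hf
    exact Finset.prod_congr rfl fun i hi => if_pos (hf.2 i hi)
  rw [Finset.sum_congr rfl hsimp]
  symm
  set φ : (p : Nat.Partition n) →
    p ∈ Finset.univ.filter (fun p : Nat.Partition n => ∀ j ∈ p.parts, j ∈ s) →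
    ℕ →₀ ℕ := fun p _ => {
      toFun := fun i => Multiset.count i p.parts • i
      support := Finset.filter (fun i => i ≠ 0) p.parts.toFinset
      mem_support_toFun := fun a => by
        simp only [smul_eq_mul, ne_eq, mul_eq_zero, Multiset.count_eq_zero]
        rw [not_or, not_not]
        simp only [Multiset.mem_toFinset, not_not, Finset.mem_filter] }
  apply Finset.sum_bij φ
  · intro p hp
    simp only [φ, Finset.mem_filter, Finset.mem_univ, true_and] at hp ⊢
    rw [mem_finsuppAntidiag]
    refine ⟨⟨?_, fun i hi => ?_⟩, fun i his => ?_⟩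
    · conv_rhs => rw [← p.parts_sum]
      rw [Finset.sum_multiset_count_of_subset _ s]
      · simp only [smul_eq_mul, Finsupp.coe_mk]
      · intro i
        simp only [Multiset.mem_toFinset]
        exact hp i
    · simp only [ne_eq, Multiset.mem_toFinset, Finset.mem_filter, Finsupp.mem_support_iff,
        Finsupp.coe_mk, smul_eq_mul, mul_eq_zero, not_or, Multiset.count_eq_zero, not_not] at hi
      exact hp i hi.1
    · simp only [Finsupp.coe_mk, smul_eq_mul]
      exact dvd_mul_left i _
  · intro p₁ hp₁ p₂ hp₂ h
    apply Nat.Partition.ext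
    simp only [Finset.mem_filter, Finset.mem_univ, true_and] at hp₁ hp₂
    ext i
    simp only [φ, ne_eq, Multiset.mem_toFinset, not_not, smul_eq_mul, Finsupp.mk.injEq] at h
    by_cases hi : i = 0
    · rw [hi]
      rw [Multiset.count_eq_zero_of_notMem]
      · rw [Multiset.count_eq_zero_of_notMem]
        intro a; exact Nat.lt_irrefl 0 (hs 0 (hp₂ 0 a))
      intro a; exact Nat.lt_irrefl 0 (hs 0 (hp₁ 0 a))
    · rw [← mul_left_inj' hi]
      rw [funext_iff] at h
      exact h.2 i
  · simp only [φ, Finset.mem_filter, mem_finsuppAntidiag, Finset.mem_univ, true_and, and_assoc]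
    rintro f ⟨hf₁, hf₂, hf₃⟩
    refine ⟨⟨∑ i ∈ s, Multiset.replicate (f i / i) i, ?_, ?_⟩, ?_, ?_⟩
    · intro i hi
      simp only [exists_prop, Multiset.mem_sum] at hi
      rcases hi with ⟨t, ht, z⟩
      apply hs
      rwa [Multiset.eq_of_mem_replicate z]
    · simp_rw [Multiset.sum_sum, Multiset.sum_replicate, Nat.nsmul_eq_mul]
      rw [← hf₁]
      exact Finset.sum_congr rfl fun i hi => Nat.div_mul_cancel (hf₃ i hi)
    · intro i hi
      rw [Multiset.mem_sum] at hi
      rcases hi with ⟨j, hj₁, hj₂⟩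
      rwa [Multiset.eq_of_mem_replicate hj₂]
    · ext i
      simp_rw [Multiset.count_sum', Multiset.count_replicate, Finset.sum_ite_eq']
      simp only [ne_eq, Multiset.mem_toFinset, not_not, smul_eq_mul, ite_mul,
        zero_mul, Finsupp.coe_mk]
      split_ifs with h
      · exact Nat.div_mul_cancel (hf₃ i h)
      · apply symm
        rw [← Finsupp.notMem_support_iff]
        exact fun hc => h (hf₂ hc)
  · intro p hp
    apply Finset.prod_congr rfl
    intro i hi
    simp only [φ, Finsupp.coe_mk, smul_eq_mul]
    rw [Nat.mul_div_cancel _ (hs i hi)]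

/-- low-order coefficient predicate -/
def Ql (n : ℕ) (ψ : PowerSeries Fq) : Prop :=
  PowerSeries.constantCoeff ψ = 1 ∧
    ∀ k, 1 ≤ k → k ≤ n → PowerSeries.coeff k ψ = 0

lemma Ql_one (n : ℕ) : Ql n 1 := by
  constructor
  · simp
  · intro k h1 _
    rw [PowerSeries.coeff_one, if_neg (by omega)]

lemma Ql_mul (n : ℕ) {ψ χ : PowerSeries Fq} (hψ : Ql n ψ) (hχ : Ql n χ) :
    Ql n (ψ * χ) := by
  constructor
  · rw [map_mul, hψ.1, hχ.1, one_mul]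
  · intro k h1 h2
    rw [PowerSeries.coeff_mul]
    apply Finset.sum_eq_zero
    rintro ⟨x, y⟩ hxy
    rw [Finset.HasAntidiagonal.mem_antidiagonal] at hxy
    rcases Nat.eq_zero_or_pos x with hx | hx
    · have hy : 1 ≤ y ∧ y ≤ n := by omega
      rw [hχ.2 y hy.1 hy.2, mul_zero]
    · rw [hψ.2 x hx (by omega), zero_mul]

lemma Ql_Gq {n i : ℕ} (h : n ≤ i) : Ql n (Gq i) := by
  constructor
  · have : PowerSeries.constantCoeff (Gq i) = PowerSeries.coeff 0 (Gq i) := by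
      rw [PowerSeries.coeff_zero_eq_constantCoeff]
    rw [this, Gq, PowerSeries.coeff_mk, if_pos (dvd_zero _)]
    simp [wq]
  · intro k h1 h2
    rw [Gq, PowerSeries.coeff_mk, if_neg]
    intro hd
    have := Nat.le_of_dvd (by omega) hd
    omega

lemma coeff_mul_Ql (n : ℕ) {B A : PowerSeries Fq} (hB : Ql n B) :
    PowerSeries.coeff n (B * A) = PowerSeries.coeff n A := by
  rw [PowerSeries.coeff_mul]
  rw [Finset.sum_eq_single_of_mem (0, n) (by simp)]
  · have h0 : PowerSeries.coeff 0 B = 1 := by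
      rw [PowerSeries.coeff_zero_eq_constantCoeff]; exact hB.1
    change PowerSeries.coeff 0 B * PowerSeries.coeff n A = _
    rw [h0, one_mul]
  · rintro ⟨x, y⟩ hxy hne
    rw [Finset.HasAntidiagonal.mem_antidiagonal] at hxy
    rcases Nat.eq_zero_or_pos x with h0 | h0
    · exfalso
      apply hne
      subst h0
      have hy : y = n := by simpa using hxy
      rw [hy]
    · change PowerSeries.coeff x B * PowerSeries.coeff y A = 0
      rw [hB.2 x h0 (by simp at hxy; omega), zero_mul]

lemma coeff_stable (n : ℕ) (S : Finset ℕ) (hS : Finset.range n ⊆ S) :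
    PowerSeries.coeff n (∏ i ∈ S, Gq i) =
      PowerSeries.coeff n (∏ i ∈ Finset.range n, Gq i) := by
  rw [← Finset.prod_sdiff hS]
  apply coeff_mul_Ql
  apply Finset.prod_induction _ (Ql n) (fun _ _ => Ql_mul n) (Ql_one n)
  intro i hi
  apply Ql_Gq
  rw [Finset.mem_sdiff, Finset.mem_range] at hi
  omega

lemma coeff_main (n : ℕ) :
    PowerSeries.coeff n (∏ i ∈ Finset.range n, Gq i) =
      ∑ p : Nat.Partition n,
        ((tq + 1) / (tq - 1)) ^ p.parts.toFinset.card
          * tq ^ (2 * n - 2 * Multiset.card p.parts)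
          * ∏ j ∈ p.parts.toFinset, (tq ^ (2 * Multiset.count j p.parts) - 1) := by
  classical
  set s : Finset ℕ := (Finset.range n).map ⟨Nat.succ, Nat.succ_injective⟩ with hsdef
  have hs : ∀ j ∈ s, 0 < j := by
    intro j hj
    rw [hsdef, Finset.mem_map] at hj
    rcases hj with ⟨a, -, rfl⟩
    exact Nat.succ_pos a
  have hprod : ∏ i ∈ Finset.range n, Gq i =
      ∏ j ∈ s, PowerSeries.mk fun m => if j ∣ m then wq (j - 1) (m / j) else 0 := by
    rw [hsdef, Finset.prod_map]
    apply Finset.prod_congr rfl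
    intro i _
    simp only [Function.Embedding.coeFn_mk, Gq, Nat.succ_eq_add_one, Nat.add_sub_cancel]
  rw [hprod, weightedGF_prop Fq n s hs (fun j k => wq (j - 1) k) (fun j => by simp [wq])]
  have hmem : ∀ (p : Nat.Partition n), ∀ j ∈ p.parts, j ∈ s := by
    intro p j hj
    have hj1 : 0 < j := p.parts_pos hj
    have hjn : j ≤ n := by
      have := Multiset.single_le_sum (fun _ _ => Nat.zero_le _) _ hj
      rwa [p.parts_sum] at this
    rw [hsdef, Finset.mem_map]
    exact ⟨j - 1, Finset.mem_range.mpr (by omega), by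
      simp only [Function.Embedding.coeFn_mk]; omega⟩
  rw [Finset.filter_true_of_mem (fun p _ => hmem p)]
  apply Finset.sum_congr rfl
  intro p _
  have hsub : p.parts.toFinset ⊆ s := by
    intro j hj
    exact hmem p j (Multiset.mem_toFinset.mp hj)
  rw [← Finset.prod_subset hsub (fun j _ hnj => by
    rw [Multiset.count_eq_zero_of_notMem (fun hc => hnj (Multiset.mem_toFinset.mpr hc))]
    simp [wq])]
  have hterm : ∀ j ∈ p.parts.toFinset,
      wq (j - 1) (Multiset.count j p.parts) =
        ((tq + 1) / (tq - 1)) *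
          (tq ^ ((2 * j - 2) * Multiset.count j p.parts) *
            (tq ^ (2 * Multiset.count j p.parts) - 1)) := by
    intro j hj
    have hj1 : 1 ≤ j := p.parts_pos (Multiset.mem_toFinset.mp hj)
    have hk : Multiset.count j p.parts ≠ 0 := by
      rw [Multiset.count_ne_zero]
      exact Multiset.mem_toFinset.mp hj
    set k := Multiset.count j p.parts with hkdef
    rw [wq, if_neg hk]
    have e1 : 2 * (j - 1) + 2 = 2 * j := by omega
    have e2 : 2 * (j - 1) = 2 * j - 2 := by omega
    have e3 : (2 * j - 2) * k + 2 * k = 2 * j * k := by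
      rw [← add_mul]; congr 1; omega
    have e4 : tq ^ (2 * j * k) = tq ^ ((2 * j - 2) * k) * tq ^ (2 * k) := by
      rw [← pow_add, e3]
    rw [e1, e2, alq, e4]
    ring
  rw [Finset.prod_congr rfl hterm, Finset.prod_mul_distrib, Finset.prod_const,
    Finset.prod_mul_distrib, Finset.prod_pow_eq_pow_sum]
  have hsum : ∑ j ∈ p.parts.toFinset, Multiset.count j p.parts * j = n := by
    have h1 := Finset.sum_multiset_count p.parts
    rw [p.parts_sum] at h1
    simp only [smul_eq_mul] at h1
    exact h1.symm
  have hcard : ∑ j ∈ p.parts.toFinset, Multiset.count j p.parts =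
      Multiset.card p.parts := Multiset.toFinset_sum_count_eq _
  have hexp : ∑ j ∈ p.parts.toFinset, (2 * j - 2) * Multiset.count j p.parts =
      2 * n - 2 * Multiset.card p.parts := by
    have h2 : ∑ j ∈ p.parts.toFinset,
        ((2 * j - 2) * Multiset.count j p.parts + 2 * Multiset.count j p.parts) =
        2 * ∑ j ∈ p.parts.toFinset, Multiset.count j p.parts * j := by
      rw [Finset.mul_sum]
      apply Finset.sum_congr rfl
      intro j hj
      have hj1 : 1 ≤ j := p.parts_pos (Multiset.mem_toFinset.mp hj)
      have h5 : 2 * j - 2 + 2 = 2 * j := by omega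
      rw [← add_mul, h5]
      ring
    rw [hsum] at h2
    rw [Finset.sum_add_distrib, ← Finset.mul_sum, hcard] at h2
    omega
  rw [hexp]
  ring

lemma apply_eq_coeff (ψ : PowerSeries Fq) (d : Unit →₀ ℕ) :
    ψ d = PowerSeries.coeff (d ()) ψ := by
  have h1 : ψ d = ψ (Finsupp.single () (d ())) := by
    exact congrArg ψ (Finsupp.unique_single d)
  exact h1

lemma hasprod_main :
    HasProd
      (fun n : ℕ =>
        (1 + PowerSeries.C (tq ^ (2 * n + 1)) * PowerSeries.X ^ (n + 1)) ^ 2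
          * (1 - PowerSeries.C (tq ^ (2 * n)) * PowerSeries.X ^ (n + 1))⁻¹
          * (1 - PowerSeries.C (tq ^ (2 * n + 2)) * PowerSeries.X ^ (n + 1))⁻¹)
      (PowerSeries.mk fun n =>
        ∑ p : Nat.Partition n,
          ((tq + 1) / (tq - 1)) ^ p.parts.toFinset.card
            * tq ^ (2 * n - 2 * Multiset.card p.parts)
            * ∏ j ∈ p.parts.toFinset, (tq ^ (2 * Multiset.count j p.parts) - 1)) := by
  have hfe : (fun n : ℕ =>
      (1 + PowerSeries.C (tq ^ (2 * n + 1)) * PowerSeries.X ^ (n + 1)) ^ 2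
        * (1 - PowerSeries.C (tq ^ (2 * n)) * PowerSeries.X ^ (n + 1))⁻¹
        * (1 - PowerSeries.C (tq ^ (2 * n + 2)) * PowerSeries.X ^ (n + 1))⁻¹)
      = Gq := funext factor_eq
  rw [hfe]
  set P : PowerSeries Fq := PowerSeries.mk fun n =>
    ∑ p : Nat.Partition n,
      ((tq + 1) / (tq - 1)) ^ p.parts.toFinset.card
        * tq ^ (2 * n - 2 * Multiset.card p.parts)
        * ∏ j ∈ p.parts.toFinset, (tq ^ (2 * Multiset.count j p.parts) - 1) with hP
  show Filter.Tendsto (fun S : Finset ℕ => ∏ i ∈ S, Gq i) Filter.atTop (nhds P)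
  refine tendsto_pi_nhds.mpr fun d => ?_
  rw [nhds_discrete, Filter.tendsto_pure]
  filter_upwards [Filter.eventually_ge_atTop (Finset.range (d ()))] with S hS
  rw [apply_eq_coeff (∏ i ∈ S, Gq i) d, apply_eq_coeff P d,
    coeff_stable (d ()) S hS, coeff_main, hP, PowerSeries.coeff_mk]

end HilbAux

/-- in `F⟦y⟧` with `F = ℚ(t)`,
`∏_{n ≥ 1} (1 + yⁿ t^{2n-1})² / ((1 - yⁿ t^{2n-2})(1 - yⁿ t^{2n}))
  = ∑_{n ≥ 0} (∑_{λ ⊢ n} ((t+1)/(t-1))^{ℓ(λ)} t^{2n-2|λ|} ∏_{j : λ_j ≥ 1} (t^{2λ_j} - 1)) yⁿ`,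
where `λ_j` is the number of parts of size `j` (so `j` ranges over the distinct
part sizes, i.e. `λ.parts.toFinset`), `|λ| = λ.parts.card` is the number of parts,
and `ℓ(λ) = λ.parts.toFinset.card` is the number of distinct part sizes.
(The product index `n : ℕ` encodes the factor for `n + 1 ≥ 1`.) -/
theorem hilbert_scheme_poincare_generating_series :
    letI F := RatFunc ℚ
    letI t : F := RatFunc.X
    HasProd
      (fun n : ℕ =>
        (1 + PowerSeries.C (t ^ (2 * n + 1)) * PowerSeries.X ^ (n + 1)) ^ 2
          * (1 - PowerSeries.C (t ^ (2 * n)) * PowerSeries.X ^ (n + 1))⁻¹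
          * (1 - PowerSeries.C (t ^ (2 * n + 2)) * PowerSeries.X ^ (n + 1))⁻¹)
      (PowerSeries.mk fun n =>
        ∑ p : Nat.Partition n,
          ((t + 1) / (t - 1)) ^ p.parts.toFinset.card
            * t ^ (2 * n - 2 * Multiset.card p.parts)
            * ∏ j ∈ p.parts.toFinset, (t ^ (2 * Multiset.count j p.parts) - 1)) :=
  hasprod_main
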